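/- Fix any realization of the index sequence j₁, j₂, … in [m] and a common initialization x₀ ∈ X, y₀ ∈ ℝⁿ. Then for every k ≥ 1 the iterates (x_k, y_k) produced by the implementation form of CLVR (which maintains z_k = z_{k−1} + (A^{S^{j_k}})ᵀ(y_k^{S^{j_k}} − y_{k−1}^{S^{j_k}}) with z₀ = Aᵀy₀, the state q₀ = a₁(z₀ + c), q_k = q_{k−1} + a_{k+1}(z_k + c) + m a_k(z_k − z_{k−1}), and sets x_k = argmin_{x∈X}{ (A_k/γ) r(x) + (1/2)‖x − x₀ + q_{k−1}/γ‖² }) coincide with the iterates of the analysis form of CLVR (which sets x_k = argmin_{x∈X} { Σ_{i=1}^{k} a_i (⟨x, Aᵀȳ_{i−1} + c⟩ + r(x)) + (γ/2)‖x − x₀‖² } with ȳ_k = y_k + (m a_k/a_{k+1})(y_k − y_{k−1}), ȳ₀ = y₀). In both forms the dual update is: y_k agrees with y_{k−1} outside block S^{j_k} and y_k^{S^{j_k}} = y_{k−1}^{S^{j_k}} + γ m a_k (A^{S^{j_k}} x_k − b^{S^{j_k}}). -/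

import Mathlib

open scoped RealInnerProductSpace BigOperators

/-- Matrix–vector product into Euclidean space. -/
noncomputable def mv {n d : ℕ} (A : Matrix (Fin n) (Fin d) ℝ)
    (x : EuclideanSpace ℝ (Fin d)) : EuclideanSpace ℝ (Fin n) :=
  WithLp.toLp 2 (fun i => ∑ j, A i j * x j)

/-- Transposed matrix–vector product. -/
noncomputable def mvT {n d : ℕ} (A : Matrix (Fin n) (Fin d) ℝ)
    (y : EuclideanSpace ℝ (Fin n)) : EuclideanSpace ℝ (Fin d) :=
  WithLp.toLp 2 (fun j => ∑ i, A i j * y i)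

lemma mvT_add {n d : ℕ} (A : Matrix (Fin n) (Fin d) ℝ) (u v : EuclideanSpace ℝ (Fin n)) :
    mvT A (u + v) = mvT A u + mvT A v := by
  ext col
  simp [mvT, mul_add, Finset.sum_add_distrib]

lemma mvT_sub {n d : ℕ} (A : Matrix (Fin n) (Fin d) ℝ) (u v : EuclideanSpace ℝ (Fin n)) :
    mvT A (u - v) = mvT A u - mvT A v := by
  ext col
  simp [mvT, mul_sub, Finset.sum_sub_distrib]

lemma mvT_smul {n d : ℕ} (A : Matrix (Fin n) (Fin d) ℝ) (t : ℝ) (u : EuclideanSpace ℝ (Fin n)) :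
    mvT A (t • u) = t • mvT A u := by
  ext col
  simp [mvT, Finset.mul_sum]
  congr 1; funext i; ring

lemma min_unique' {d : ℕ} {X : Set (EuclideanSpace ℝ (Fin d))} (hXconv : Convex ℝ X)
    {r : EuclideanSpace ℝ (Fin d) → ℝ} (hr : ConvexOn ℝ Set.univ r)
    {α : ℝ} (hα : 0 ≤ α) (w : EuclideanSpace ℝ (Fin d))
    {u v : EuclideanSpace ℝ (Fin d)} (hu : u ∈ X) (hv : v ∈ X)
    (hmu : ∀ x ∈ X, α * r u + 1 / 2 * ‖u - w‖ ^ 2 ≤ α * r x + 1 / 2 * ‖x - w‖ ^ 2)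
    (hmv : ∀ x ∈ X, α * r v + 1 / 2 * ‖v - w‖ ^ 2 ≤ α * r x + 1 / 2 * ‖x - w‖ ^ 2) :
    u = v := by
  set p := (1/2:ℝ) • u + (1/2:ℝ) • v with hp
  have hpX : p ∈ X := hXconv hu hv (by norm_num) (by norm_num) (by norm_num)
  have hrp : r p ≤ 1/2 * r u + 1/2 * r v :=
    hr.2 (Set.mem_univ u) (Set.mem_univ v) (by norm_num) (by norm_num) (by norm_num)
  have hpw : p - w = (1/2:ℝ) • ((u - w) + (v - w)) := by
    rw [hp]; module
  have hnorm : ‖p - w‖^2 = 1/2 * ‖u-w‖^2 + 1/2 * ‖v-w‖^2 - 1/4 * ‖u - v‖^2 := by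
    have hpar := parallelogram_law_with_norm ℝ (u - w) (v - w)
    have hd : (u - w) - (v - w) = u - v := by abel
    rw [hpw, norm_smul]
    rw [hd] at hpar
    have : ‖(1/2:ℝ)‖ = 1/2 := by norm_num [Real.norm_eq_abs]
    rw [this, mul_pow]
    nlinarith [hpar]
  have h1 := hmu p hpX
  have h2 := hmv u hu
  have h3 := hmu v hv
  have h4 : α * r p ≤ α * (1/2 * r u + 1/2 * r v) := mul_le_mul_of_nonneg_left hrp hα
  have h5 : ‖u - v‖^2 ≤ 0 := by nlinarith
  have h6 : ‖u - v‖ = 0 := by nlinarith [norm_nonneg (u - v), sq_nonneg ‖u - v‖]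
  exact sub_eq_zero.mp (norm_eq_zero.mp h6)

/-- Proposition 1 (equivalence of the implementation and analysis forms of CLVR):
for any fixed realization of the block indices and common initialization, the iterates
of the implementation form (maintaining `z_k`, `q_k` and a proximal step) coincide with
the iterates of the analysis form (dual averaging against extrapolated duals `ȳ`). -/
theorem clvr_implementation_analysis_equivalence
    (n d m : ℕ) (hm : 0 < m)
    (A : Matrix (Fin n) (Fin d) ℝ) (b : EuclideanSpace ℝ (Fin n))
    (c : EuclideanSpace ℝ (Fin d))
    (X : Set (EuclideanSpace ℝ (Fin d)))
    (hXne : X.Nonempty) (hXc : IsClosed X) (hXconv : Convex ℝ X)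
    (r : EuclideanSpace ℝ (Fin d) → ℝ) (σ : ℝ) (hσ : 0 ≤ σ)
    (hrconv : ConvexOn ℝ Set.univ r) (hrstrong : StrongConvexOn X σ r)
    (S : Fin n → Fin m) (hS : Function.Surjective S)
    (Lhat : ℝ) (hLhat : 0 < Lhat)
    (γ : ℝ) (hγ : 0 < γ)
    -- step sizes
    (a Aseq : ℕ → ℝ)
    (ha0 : a 0 = 0) (hA0 : Aseq 0 = 0)
    (ha1 : a 1 = 1 / (Real.sqrt 2 * Lhat * m))
    (harec : ∀ k, 1 ≤ k →
      a (k + 1) = Real.sqrt (1 + σ * Aseq k / γ) / (Real.sqrt 2 * Lhat * m))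
    (hArec : ∀ k, Aseq (k + 1) = Aseq k + a (k + 1))
    -- a fixed realization of the block indices (j k is the index used at iteration k)
    (j : ℕ → Fin m)
    -- common initialization
    (x0 : EuclideanSpace ℝ (Fin d)) (y0 : EuclideanSpace ℝ (Fin n)) (hx0X : x0 ∈ X)
    -- implementation-form iterates
    (xI : ℕ → EuclideanSpace ℝ (Fin d)) (yI : ℕ → EuclideanSpace ℝ (Fin n))
    (z q : ℕ → EuclideanSpace ℝ (Fin d))
    (hxI0 : xI 0 = x0) (hyI0 : yI 0 = y0)
    (hz0 : z 0 = mvT A y0)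
    (hz : ∀ k, 1 ≤ k → ∀ col : Fin d,
      z k col = z (k - 1) col
        + ∑ i ∈ Finset.univ.filter (fun i => S i = j k), A i col * (yI k i - yI (k - 1) i))
    (hq0 : q 0 = a 1 • (z 0 + c))
    (hq : ∀ k, 1 ≤ k →
      q k = q (k - 1) + a (k + 1) • (z k + c) + ((m : ℝ) * a k) • (z k - z (k - 1)))
    (hxImin : ∀ k, 1 ≤ k → xI k ∈ X ∧ ∀ x' ∈ X,
      Aseq k / γ * r (xI k) + 1 / 2 * ‖xI k - (x0 - γ⁻¹ • q (k - 1))‖ ^ 2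
        ≤ Aseq k / γ * r x' + 1 / 2 * ‖x' - (x0 - γ⁻¹ • q (k - 1))‖ ^ 2)
    (hyIupd : ∀ k, 1 ≤ k → ∀ i : Fin n,
      yI k i = if S i = j k
        then yI (k - 1) i + γ * m * a k * (mv A (xI k) i - b i)
        else yI (k - 1) i)
    -- analysis-form iterates
    (xA : ℕ → EuclideanSpace ℝ (Fin d)) (yA ybar : ℕ → EuclideanSpace ℝ (Fin n))
    (hxA0 : xA 0 = x0) (hyA0 : yA 0 = y0) (hybar0 : ybar 0 = y0)
    (hxAmin : ∀ k, 1 ≤ k → xA k ∈ X ∧ ∀ x' ∈ X,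
      ((∑ i ∈ Finset.Icc 1 k, a i * (⟪xA k, mvT A (ybar (i - 1)) + c⟫ + r (xA k)))
          + γ / 2 * ‖xA k - x0‖ ^ 2)
        ≤ ((∑ i ∈ Finset.Icc 1 k, a i * (⟪x', mvT A (ybar (i - 1)) + c⟫ + r x'))
          + γ / 2 * ‖x' - x0‖ ^ 2))
    (hyAupd : ∀ k, 1 ≤ k → ∀ i : Fin n,
      yA k i = if S i = j k
        then yA (k - 1) i + γ * m * a k * (mv A (xA k) i - b i)
        else yA (k - 1) i)
    (hybar : ∀ k, 1 ≤ k →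
      ybar k = yA k + (m * a k / a (k + 1)) • (yA k - yA (k - 1))) :
    ∀ k : ℕ, xI k = xA k ∧ yI k = yA k := by
  -- positivity of a (k+1) and nonnegativity of Aseq k
  have hm' : (0:ℝ) < (m:ℝ) := by exact_mod_cast hm
  have hden : (0:ℝ) < Real.sqrt 2 * Lhat * m := by
    have h2 : (0:ℝ) < Real.sqrt 2 := Real.sqrt_pos.mpr (by norm_num)
    positivity
  have key : ∀ k, 0 ≤ Aseq k ∧ 0 < a (k + 1) := by
    intro k
    induction k with
    | zero =>
      refine ⟨le_of_eq hA0.symm, ?_⟩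
      rw [ha1]; positivity
    | succ k ih =>
      have hA : 0 ≤ Aseq (k + 1) := by
        rw [hArec]; exact add_nonneg ih.1 ih.2.le
      refine ⟨hA, ?_⟩
      rw [harec (k + 1) (Nat.succ_le_succ (Nat.zero_le k))]
      have hnum : 0 < Real.sqrt (1 + σ * Aseq (k + 1) / γ) := by
        apply Real.sqrt_pos.mpr
        have : 0 ≤ σ * Aseq (k + 1) / γ := by positivity
        linarith
      positivity
  have hAnn : ∀ k, 0 ≤ Aseq k := fun k => (key k).1
  have hapos : ∀ k, 0 < a (k + 1) := fun k => (key k).2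
  -- Aseq is the partial sum of a
  have hAsum : ∀ K, ∑ i ∈ Finset.Icc 1 K, a i = Aseq K := by
    intro K
    induction K with
    | zero => simp [hA0]
    | succ K ih =>
      rw [Finset.sum_Icc_succ_top (Nat.succ_le_succ (Nat.zero_le K)), ih, hArec]
  -- main induction
  suffices H : ∀ k, (xI k = xA k ∧ yI k = yA k) ∧
      (z k = mvT A (yI k) ∧
        q k = ∑ i ∈ Finset.Icc 1 (k + 1), a i • (mvT A (ybar (i - 1)) + c)) by
    exact fun k => (H k).1
  intro k
  induction k with
  | zero =>
    refine ⟨⟨hxI0.trans hxA0.symm, hyI0.trans hyA0.symm⟩, ?_, ?_⟩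
    · rw [hz0, hyI0]
    · rw [hq0]
      simp [hz0, hybar0]
  | succ k IH =>
    obtain ⟨⟨hx, hy⟩, hzk, hqk⟩ := IH
    have hK : 1 ≤ k + 1 := Nat.succ_le_succ (Nat.zero_le k)
    -- Step 1: the two primal objectives agree up to a constant
    have keyid : ∀ x : EuclideanSpace ℝ (Fin d),
        (∑ i ∈ Finset.Icc 1 (k + 1), a i * (⟪x, mvT A (ybar (i - 1)) + c⟫ + r x))
          + γ / 2 * ‖x - x0‖ ^ 2
        = γ * (Aseq (k + 1) / γ * r x + 1 / 2 * ‖x - (x0 - γ⁻¹ • q k)‖ ^ 2)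
          + (⟪x0, q k⟫ - γ⁻¹ / 2 * ‖q k‖ ^ 2) := by
      intro x
      have e1 : ∑ i ∈ Finset.Icc 1 (k + 1), a i * (⟪x, mvT A (ybar (i - 1)) + c⟫ + r x)
          = ⟪x, q k⟫ + Aseq (k + 1) * r x := by
        rw [hqk, inner_sum, ← hAsum (k + 1), Finset.sum_mul, ← Finset.sum_add_distrib]
        apply Finset.sum_congr rfl
        intro i _
        rw [real_inner_smul_right]
        ring
      have hxw : x - (x0 - γ⁻¹ • q k) = (x - x0) + γ⁻¹ • q k := by abel
      have e2 : ‖x - (x0 - γ⁻¹ • q k)‖ ^ 2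
          = ‖x - x0‖ ^ 2 + 2 * (γ⁻¹ * (⟪x, q k⟫ - ⟪x0, q k⟫)) + γ⁻¹ ^ 2 * ‖q k‖ ^ 2 := by
        rw [hxw, norm_add_sq_real, real_inner_smul_right, inner_sub_left, norm_smul,
          mul_pow, Real.norm_eq_abs, sq_abs]
      rw [e1, e2]
      field_simp
      ring
    -- Step 2: xI (k+1) = xA (k+1)
    obtain ⟨hxIX, hxImin'⟩ := hxImin (k + 1) hK
    obtain ⟨hxAX, hxAmin'⟩ := hxAmin (k + 1) hK
    simp only [Nat.add_sub_cancel] at hxImin'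
    have hA' : ∀ x' ∈ X,
        Aseq (k + 1) / γ * r (xA (k + 1)) + 1 / 2 * ‖xA (k + 1) - (x0 - γ⁻¹ • q k)‖ ^ 2
          ≤ Aseq (k + 1) / γ * r x' + 1 / 2 * ‖x' - (x0 - γ⁻¹ • q k)‖ ^ 2 := by
      intro x' hx'
      have h := hxAmin' x' hx'
      rw [keyid (xA (k + 1)), keyid x'] at h
      have h2 : γ * (Aseq (k + 1) / γ * r (xA (k + 1))
            + 1 / 2 * ‖xA (k + 1) - (x0 - γ⁻¹ • q k)‖ ^ 2)
          ≤ γ * (Aseq (k + 1) / γ * r x' + 1 / 2 * ‖x' - (x0 - γ⁻¹ • q k)‖ ^ 2) := by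
        linarith
      exact le_of_mul_le_mul_left h2 hγ
    have hxK : xI (k + 1) = xA (k + 1) :=
      min_unique' hXconv hrconv (div_nonneg (hAnn (k + 1)) hγ.le) _ hxIX hxAX hxImin' hA'
    -- Step 3: yI (k+1) = yA (k+1)
    have hyK : yI (k + 1) = yA (k + 1) := by
      ext i
      rw [hyIupd (k + 1) hK i, hyAupd (k + 1) hK i]
      simp only [Nat.add_sub_cancel]
      rw [hy, hxK]
    -- Step 4: z (k+1) = mvT A (yI (k+1))
    have hzK : z (k + 1) = mvT A (yI (k + 1)) := by
      ext col
      rw [hz (k + 1) hK col]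
      simp only [Nat.add_sub_cancel]
      have hfull : ∑ i ∈ Finset.univ.filter (fun i => S i = j (k + 1)),
            A i col * (yI (k + 1) i - yI k i)
          = ∑ i : Fin n, A i col * (yI (k + 1) i - yI k i) := by
        rw [Finset.sum_filter]
        apply Finset.sum_congr rfl
        intro i _
        split_ifs with h
        · rfl
        · have hupd := hyIupd (k + 1) hK i
          rw [if_neg h] at hupd
          simp only [Nat.add_sub_cancel] at hupd
          rw [hupd]
          ring
      rw [hfull]
      have : z k col = mvT A (yI k) col := by rw [hzk]
      rw [this]
      simp only [mvT]
      rw [← Finset.sum_add_distrib]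
      apply Finset.sum_congr rfl
      intro i _
      ring
    -- Step 5: q (k+1)
    have haK2 : a (k + 2) ≠ 0 := (hapos (k + 1)).ne'
    have hybarK : mvT A (ybar (k + 1))
        = z (k + 1) + ((m : ℝ) * a (k + 1) / a (k + 2)) • (z (k + 1) - z k) := by
      rw [hybar (k + 1) hK]
      simp only [Nat.add_sub_cancel]
      rw [mvT_add, mvT_smul, mvT_sub, ← hyK, ← hy, ← hzK, ← hzk]
    have hqK : q (k + 1) = ∑ i ∈ Finset.Icc 1 (k + 2), a i • (mvT A (ybar (i - 1)) + c) := by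
      rw [hq (k + 1) hK]
      simp only [Nat.add_sub_cancel]
      rw [Finset.sum_Icc_succ_top (by omega : 1 ≤ k + 2), ← hqk]
      simp only [Nat.add_sub_cancel]
      rw [hybarK]
      have e : k + 1 + 1 = k + 2 := by omega
      simp only [e]
      have hrat : a (k + 2) * ((m : ℝ) * a (k + 1) / a (k + 2)) = (m : ℝ) * a (k + 1) := by
        field_simp
      simp only [smul_add, smul_smul, hrat]
      abel
    exact ⟨⟨hxK, hyK⟩, hzK, hqK⟩
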